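/- Let l ≥ 1 be an integer, L > 0 and ν > l. There exists a constant C depending only on l, ν and L such that for every κ > 0 the Lebesgue measure of the set {ω ∈ [−L,L]^l : there exist k ∈ ℤ^l∖{0} and m ∈ ℤ with |ω·k − m| < κ^{−1}|k|^{−ν}} is at most C·κ^{−1}. -/

import Mathlib

open scoped BigOperators
open MeasureTheory

noncomputable section

/-- One-dimensional section estimate. -/
lemma aux_sec (L : ℝ) (hL : 0 ≤ L) (a c ε : ℝ) (ha : 1 ≤ |a|) (hε : 0 < ε) (hε1 : ε ≤ 1) :
    volume {x : ℝ | x ∈ Set.Icc (-L) L ∧ ∃ m : ℤ, |x * a + c - m| < ε} ≤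
      ENNReal.ofReal ((2*L+3) * (2*ε)) := by
  have hapos : (0:ℝ) < |a| := lt_of_lt_of_le one_pos ha
  have ha0 : a ≠ 0 := by
    intro h; rw [h, abs_zero] at ha; linarith
  set F : Finset ℤ := Finset.Icc ⌈c - L*|a| - 1⌉ ⌊c + L*|a| + 1⌋ with hF
  have hsub : {x : ℝ | x ∈ Set.Icc (-L) L ∧ ∃ m : ℤ, |x * a + c - m| < ε} ⊆
      ⋃ m ∈ F, Metric.closedBall (((m:ℝ) - c)/a) (ε/|a|) := by
    rintro x ⟨⟨hx1, hx2⟩, m, hm⟩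
    have hxa : |x * a| ≤ L * |a| := by
      rw [abs_mul]
      exact mul_le_mul_of_nonneg_right (abs_le.2 ⟨hx1, hx2⟩) (abs_nonneg a)
    have hxa1 : -(L*|a|) ≤ x * a := neg_le_of_abs_le hxa
    have hxa2 : x * a ≤ L*|a| := le_of_abs_le hxa
    obtain ⟨hm1, hm2⟩ := abs_lt.1 hm
    refine Set.mem_biUnion (show m ∈ F from ?_) ?_
    · rw [hF, Finset.mem_Icc]
      constructor
      · rw [Int.ceil_le]; push_cast; linarith
      · rw [Int.le_floor]; push_cast; linarith
    · rw [Metric.mem_closedBall, Real.dist_eq]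
      have hx : x - ((m:ℝ) - c)/a = (x * a + c - m)/a := by field_simp; ring
      rw [hx, abs_div]
      gcongr

  have hcard : (F.card : ℝ) ≤ 2*L*|a| + 3 := by
    rw [hF, Int.card_Icc]
    have h1 : ((⌊c + L*|a| + 1⌋ : ℝ)) ≤ c + L*|a| + 1 := Int.floor_le _
    have h2 : c - L*|a| - 1 ≤ ((⌈c - L*|a| - 1⌉ : ℝ)) := Int.le_ceil _
    rcases le_or_gt (⌊c + L*|a| + 1⌋ + 1 - ⌈c - L*|a| - 1⌉) 0 with h | h
    · rw [Int.toNat_of_nonpos h]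
      push_cast
      nlinarith
    · rw [← Int.cast_natCast, Int.toNat_of_nonneg h.le]
      push_cast
      linarith
  calc volume {x : ℝ | x ∈ Set.Icc (-L) L ∧ ∃ m : ℤ, |x * a + c - m| < ε}
      ≤ volume (⋃ m ∈ F, Metric.closedBall (((m:ℝ) - c)/a) (ε/|a|)) := measure_mono hsub
    _ ≤ ∑ m ∈ F, volume (Metric.closedBall (((m:ℝ) - c)/a) (ε/|a|)) :=
        measure_biUnion_finset_le F _
    _ = F.card * ENNReal.ofReal (2 * (ε/|a|)) := by
        simp [Real.volume_closedBall, Finset.sum_const, nsmul_eq_mul]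
    _ ≤ ENNReal.ofReal ((2*L+3) * (2*ε)) := by
        rw [← ENNReal.ofReal_natCast F.card, ← ENNReal.ofReal_mul (Nat.cast_nonneg _)]
        apply ENNReal.ofReal_le_ofReal
        have hεa : 0 ≤ 2 * (ε/|a|) := by positivity
        have step1 : (F.card : ℝ) * (2 * (ε/|a|)) ≤ (2*L*|a| + 3) * (2 * (ε/|a|)) :=
          mul_le_mul_of_nonneg_right hcard hεa
        refine step1.trans ?_
        rw [div_eq_mul_inv]
        have hinv : |a| * |a|⁻¹ = 1 := mul_inv_cancel₀ (ne_of_gt hapos)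
        have hinv1 : |a|⁻¹ ≤ 1 := by
          rw [inv_le_one_iff₀]; right; exact ha
        have e1 : (2 * L * |a| + 3) * (2 * (ε * |a|⁻¹)) =
            4 * L * ε * (|a| * |a|⁻¹) + 6 * ε * |a|⁻¹ := by ring
        rw [e1, hinv]
        nlinarith [mul_le_mul_of_nonneg_left hinv1 (by positivity : (0:ℝ) ≤ 6*ε)]

/-- Slab estimate in the cube `[-L,L]^{n+1}`. -/
lemma aux_slab (n : ℕ) (L : ℝ) (hL : 0 < L) (k : Fin (n+1) → ℤ) (j : Fin (n+1))
    (hkj : k j ≠ 0) (ε : ℝ) (hε : 0 < ε) (hε1 : ε ≤ 1) :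
    volume {ω : Fin (n+1) → ℝ | (∀ s, ω s ∈ Set.Icc (-L) L) ∧
        ∃ m : ℤ, |(∑ s, ω s * (k s : ℝ)) - (m:ℝ)| < ε} ≤
      ENNReal.ofReal ((2*L)^n * ((2*L+3) * (2*ε))) := by
  set T := {ω : Fin (n+1) → ℝ | (∀ s, ω s ∈ Set.Icc (-L) L) ∧
      ∃ m : ℤ, |(∑ s, ω s * (k s : ℝ)) - (m:ℝ)| < ε} with hT
  have hmT : MeasurableSet T := by
    have : T = (Set.univ.pi fun _ : Fin (n+1) => Set.Icc (-L) L) ∩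
        ⋃ m : ℤ, {ω : Fin (n+1) → ℝ | |(∑ s, ω s * (k s : ℝ)) - (m:ℝ)| < ε} := by
      ext ω
      constructor
      · rintro ⟨hbox, m, hm⟩
        exact ⟨Set.mem_univ_pi.2 hbox, Set.mem_iUnion.2 ⟨m, hm⟩⟩
      · rintro ⟨hbox, hm⟩
        obtain ⟨m, hm⟩ := Set.mem_iUnion.1 hm
        exact ⟨fun s => Set.mem_univ_pi.1 hbox s, m, hm⟩
    rw [this]
    refine (MeasurableSet.univ_pi fun _ => measurableSet_Icc).inter
      (MeasurableSet.iUnion fun m => ?_)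
    have hmeas : Measurable fun ω : Fin (n+1) → ℝ => |(∑ s, ω s * (k s : ℝ)) - (m:ℝ)| := by
      apply Measurable.abs
      apply Measurable.sub_const
      exact Finset.measurable_sum _ fun s _ => (measurable_pi_apply s).mul_const _
    exact measurableSet_lt hmeas measurable_const
  set e := MeasurableEquiv.piFinSuccAbove (fun _ : Fin (n+1) => ℝ) j with he
  have hmp := (measurePreserving_piFinSuccAbove (fun _ : Fin (n+1) => (volume : Measure ℝ)) j).symm
  have hTvol : volume T = ((volume : Measure ℝ).prod
      (Measure.pi fun _ : Fin n => (volume : Measure ℝ))) (e.symm ⁻¹' T) := by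
    rw [volume_pi]
    exact (hmp.measure_preimage hmT.nullMeasurableSet).symm
  have hmT' : MeasurableSet (e.symm ⁻¹' T) := e.symm.measurable hmT
  rw [hTvol, Measure.prod_apply_symm hmT']
  have hbound : ∀ y : Fin n → ℝ,
      volume ((fun x => (x, y)) ⁻¹' (e.symm ⁻¹' T)) ≤
        (Set.univ.pi fun _ : Fin n => Set.Icc (-L) L).indicator
          (fun _ => ENNReal.ofReal ((2*L+3) * (2*ε))) y := by
    intro y
    have hz1 : ∀ (x : ℝ), e.symm (x, y) j = x := by
      intro x; simp [he, MeasurableEquiv.piFinSuccAbove, MeasurableEquiv.symm, Fin.insertNthEquiv]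
    have hz2 : ∀ (x : ℝ) (t : Fin n), e.symm (x, y) (j.succAbove t) = y t := by
      intro x t; simp [he, MeasurableEquiv.piFinSuccAbove, MeasurableEquiv.symm, Fin.insertNthEquiv]
    by_cases hy : ∀ t, y t ∈ Set.Icc (-L) L
    · rw [Set.indicator_of_mem (Set.mem_univ_pi.2 hy)]
      have hsub : ((fun x => (x, y)) ⁻¹' (e.symm ⁻¹' T)) ⊆
          {x : ℝ | x ∈ Set.Icc (-L) L ∧
            ∃ m : ℤ, |x * (k j : ℝ) + (∑ t, y t * (k (j.succAbove t) : ℝ)) - m| < ε} := by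
        intro x hx
        have hx' : e.symm (x, y) ∈ T := hx
        obtain ⟨hbox, m, hm⟩ := hx'
        have hbj := hbox j
        rw [hz1 x] at hbj
        refine ⟨hbj, m, ?_⟩
        have hsum : (∑ s, e.symm (x, y) s * (k s : ℝ)) =
            x * (k j : ℝ) + ∑ t, y t * (k (j.succAbove t) : ℝ) := by
          rw [Fin.sum_univ_succAbove (fun s => e.symm (x, y) s * (k s : ℝ)) j, hz1 x]
          congr 1
          exact Finset.sum_congr rfl fun t _ => by rw [hz2 x t]
        rw [hsum] at hm
        exact hm
      calc volume ((fun x => (x, y)) ⁻¹' (e.symm ⁻¹' T)) ≤ _ := measure_mono hsub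
        _ ≤ ENNReal.ofReal ((2*L+3) * (2*ε)) := by
            apply aux_sec L hL.le _ _ ε ?_ hε hε1
            rw [← Int.cast_abs]
            exact_mod_cast Int.one_le_abs hkj
    · rw [Set.indicator_of_notMem (fun hmem => hy fun t => Set.mem_univ_pi.1 hmem t)]
      have : ((fun x => (x, y)) ⁻¹' (e.symm ⁻¹' T)) = ∅ := by
        ext x
        simp only [Set.mem_preimage, Set.mem_empty_iff_false, iff_false]
        intro hx
        have hx' : e.symm (x, y) ∈ T := hx
        refine hy fun t => ?_
        have hb := hx'.1 (j.succAbove t)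
        rw [hz2 x t] at hb
        exact hb
      simp [this]
  calc (∫⁻ y, volume ((fun x => (x, y)) ⁻¹' (e.symm ⁻¹' T))
        ∂(Measure.pi fun _ : Fin n => (volume : Measure ℝ)))
      ≤ ∫⁻ y, (Set.univ.pi fun _ : Fin n => Set.Icc (-L) L).indicator
          (fun _ => ENNReal.ofReal ((2*L+3) * (2*ε))) y
        ∂(Measure.pi fun _ : Fin n => (volume : Measure ℝ)) := lintegral_mono hbound
    _ = ENNReal.ofReal ((2*L+3) * (2*ε)) *
        (Measure.pi fun _ : Fin n => (volume : Measure ℝ))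
          (Set.univ.pi fun _ : Fin n => Set.Icc (-L) L) :=
        lintegral_indicator_const (MeasurableSet.univ_pi fun _ => measurableSet_Icc) _
    _ = ENNReal.ofReal ((2*L+3) * (2*ε)) * ENNReal.ofReal ((2*L)^n) := by
        rw [Measure.pi_pi]
        congr 1
        simp only [Real.volume_Icc]
        rw [Finset.prod_const, Finset.card_univ, Fintype.card_fin,
          ← ENNReal.ofReal_pow (by linarith)]
        congr 1
        ring
    _ = ENNReal.ofReal ((2*L)^n * ((2*L+3) * (2*ε))) := by
        rw [← ENNReal.ofReal_mul (by positivity), mul_comm]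

/-- tsum of a product over a pi type. -/
lemma aux_tsum_pi (w : ℤ → ENNReal) : ∀ n : ℕ,
    (∑' k : Fin n → ℤ, ∏ s, w (k s)) = (∑' j : ℤ, w j) ^ n := by
  intro n
  induction n with
  | zero =>
      rw [pow_zero]
      rw [tsum_eq_single (fun _ => 0) (fun b hb => (hb (Subsingleton.elim b _)).elim)]
      simp
  | succ n ih =>
      rw [← (Fin.consEquiv fun _ : Fin (n+1) => ℤ).tsum_eq fun k => ∏ s, w (k s)]
      have hpt : ∀ p : ℤ × (Fin n → ℤ),
          (∏ s, w (((Fin.consEquiv fun _ : Fin (n+1) => ℤ) p) s)) =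
            w p.1 * ∏ t, w (p.2 t) := by
        rintro ⟨a, b⟩
        rw [Fin.prod_univ_succ]
        simp [Fin.consEquiv]
      calc (∑' p : ℤ × (Fin n → ℤ), ∏ s, w (((Fin.consEquiv fun _ : Fin (n+1) => ℤ) p) s))
          = ∑' p : ℤ × (Fin n → ℤ), w p.1 * ∏ t, w (p.2 t) := by
            exact tsum_congr hpt
        _ = ∑' a : ℤ, ∑' b : Fin n → ℤ, w a * ∏ t, w (b t) := ENNReal.tsum_prod'
        _ = ∑' a : ℤ, w a * ∑' b : Fin n → ℤ, ∏ t, w (b t) := by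
            exact tsum_congr fun a => ENNReal.tsum_mul_left
        _ = (∑' j : ℤ, w j) ^ (n+1) := by
            rw [ih, ENNReal.tsum_mul_right, pow_succ]
            ring

/-- Measure of near-resonant frequencies: for `ν > l` there is `C = C(l,ν,L)` such
that for every `κ > 0`, the set of `ω ∈ [−L,L]^l` failing the Diophantine condition
`|ω·k − m| ≥ κ⁻¹|k|^{−ν}` for some `k ≠ 0`, `m ∈ ℤ`, has measure at most `C/κ`. -/
theorem statement10 (l : ℕ) (hl : 1 ≤ l) (L ν : ℝ) (hL : 0 < L) (hν : (l : ℝ) < ν) :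
    ∃ C : ℝ, 0 < C ∧ ∀ κ : ℝ, 0 < κ →
      volume {ω : Fin l → ℝ |
        (∀ s, ω s ∈ Set.Icc (-L) L) ∧
        ∃ k : Fin l → ℤ, k ≠ 0 ∧ ∃ m : ℤ,
          |(∑ s, ω s * k s) - m| < κ⁻¹ * (∑ s, |(k s : ℝ)|) ^ (-ν)} ≤
      ENNReal.ofReal (C / κ) := by
  obtain ⟨n, rfl⟩ : ∃ n : ℕ, l = n + 1 := ⟨l - 1, (Nat.succ_pred_eq_of_pos hl).symm⟩
  have hνl : ((n:ℝ) + 1) < ν := by push_cast at hν; linarith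
  have hn1 : (0:ℝ) < (n:ℝ) + 1 := by positivity
  have hν0 : (0:ℝ) < ν := lt_trans hn1 hνl
  set p : ℝ := ν / ((n:ℝ) + 1) with hp
  have hp1 : 1 < p := (one_lt_div hn1).2 hνl
  have hp0 : 0 < p := lt_trans one_pos hp1
  set w : ℤ → ENNReal := fun j => ENNReal.ofReal ((max 1 |(j:ℝ)|) ^ (-p)) with hw
  have hWne : (∑' j : ℤ, w j) ≠ ⊤ := by
    have hsum := Real.summable_abs_int_rpow hp1
    have hb : ∀ j : ℤ, w j ≤ ENNReal.ofReal (|(j:ℝ)| ^ (-p)) +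
        Set.indicator {(0:ℤ)} (fun _ => (1:ENNReal)) j := by
      intro j
      rcases eq_or_ne j 0 with rfl | hj
      · have : w 0 = 1 := by simp [hw]
        rw [this, Set.indicator_of_mem (Set.mem_singleton _)]
        exact le_add_self
      · have h1 : (1:ℝ) ≤ |(j:ℝ)| := by
          rw [← Int.cast_abs]; exact_mod_cast Int.one_le_abs hj
        have : w j = ENNReal.ofReal (|(j:ℝ)| ^ (-p)) := by
          rw [hw]; simp only []
          rw [max_eq_right h1]
        rw [this]
        exact le_self_add
    have hind : (∑' j : ℤ, Set.indicator {(0:ℤ)} (fun _ => (1:ENNReal)) j) = 1 := by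
      rw [tsum_eq_single (0:ℤ) fun b hb => Set.indicator_of_notMem (by simpa using hb) _]
      simp
    refine ne_of_lt ?_
    calc (∑' j : ℤ, w j)
        ≤ ∑' j : ℤ, (ENNReal.ofReal (|(j:ℝ)| ^ (-p)) +
            Set.indicator {(0:ℤ)} (fun _ => (1:ENNReal)) j) := ENNReal.tsum_le_tsum hb
      _ = (∑' j : ℤ, ENNReal.ofReal (|(j:ℝ)| ^ (-p))) + 1 := by rw [ENNReal.tsum_add, hind]
      _ < ⊤ := by
          rw [← ENNReal.ofReal_tsum_of_nonneg (fun j => Real.rpow_nonneg (abs_nonneg _) _) hsum]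
          exact ENNReal.add_lt_top.2 ⟨ENNReal.ofReal_lt_top, ENNReal.one_lt_top⟩
  set W : ENNReal := ∑' j : ℤ, w j with hWdef
  have hWpow : W ^ (n+1) ≠ ⊤ := ENNReal.pow_ne_top hWne
  set Sr : ℝ := (W ^ (n+1)).toReal with hSr
  have hSr0 : 0 ≤ Sr := ENNReal.toReal_nonneg
  set D : ℝ := (2*L)^n * (2*L+3) * 2 with hD
  have hD0 : 0 < D := by positivity
  refine ⟨D * Sr + (2*L)^(n+1) + 1, by positivity, ?_⟩
  intro κ hκ
  set C : ℝ := D * Sr + (2*L)^(n+1) + 1 with hC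
  have hC0 : 0 < C := by positivity
  set B := {ω : Fin (n+1) → ℝ |
      (∀ s, ω s ∈ Set.Icc (-L) L) ∧
      ∃ k : Fin (n+1) → ℤ, k ≠ 0 ∧ ∃ m : ℤ,
        |(∑ s, ω s * k s) - m| < κ⁻¹ * (∑ s, |(k s : ℝ)|) ^ (-ν)} with hB
  rcases lt_or_ge κ 1 with hκ1 | hκ1
  · -- small κ: trivial bound by the volume of the cube
    have hBsub : B ⊆ Set.univ.pi fun _ : Fin (n+1) => Set.Icc (-L) L :=
      fun ω hω => Set.mem_univ_pi.2 fun s => hω.1 s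
    calc volume B ≤ volume (Set.univ.pi fun _ : Fin (n+1) => Set.Icc (-L) L) :=
          measure_mono hBsub
      _ = ENNReal.ofReal ((2*L)^(n+1)) := by
          rw [volume_pi_pi]
          simp only [Real.volume_Icc]
          rw [Finset.prod_const, Finset.card_univ, Fintype.card_fin,
            ← ENNReal.ofReal_pow (by linarith)]
          congr 1
          ring
      _ ≤ ENNReal.ofReal (C / κ) := by
          apply ENNReal.ofReal_le_ofReal
          rw [le_div_iff₀ hκ]
          nlinarith [pow_pos (by linarith : (0:ℝ) < 2*L) (n+1), mul_nonneg hD0.le hSr0]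
  · -- large κ
    set U : (Fin (n+1) → ℤ) → Set (Fin (n+1) → ℝ) := fun k =>
      {ω : Fin (n+1) → ℝ | (∀ s, ω s ∈ Set.Icc (-L) L) ∧ k ≠ 0 ∧
        ∃ m : ℤ, |(∑ s, ω s * k s) - m| < κ⁻¹ * (∑ s, |(k s : ℝ)|) ^ (-ν)} with hU
    have hBsub : B ⊆ ⋃ k : Fin (n+1) → ℤ, U k := by
      rintro ω ⟨hbox, k, hk, m, hm⟩
      exact Set.mem_iUnion.2 ⟨k, hbox, hk, m, hm⟩
    have hterm : ∀ k : Fin (n+1) → ℤ,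
        volume (U k) ≤ ENNReal.ofReal (D * κ⁻¹) * ∏ s, w (k s) := by
      intro k
      rcases eq_or_ne k 0 with rfl | hk
      · have : U 0 = ∅ := by
          ext ω; simp [hU]
        simp [this]
      · obtain ⟨j, hj⟩ : ∃ j, k j ≠ 0 := by
          by_contra h
          push_neg at h
          exact hk (funext h)
        set r : ℝ := ∑ s, |(k s : ℝ)| with hr
        have hr1 : (1:ℝ) ≤ r := by
          have h1 : (1:ℝ) ≤ |(k j : ℝ)| := by
            rw [← Int.cast_abs]; exact_mod_cast Int.one_le_abs hj
          exact h1.trans (Finset.single_le_sum (f := fun s => |(k s : ℝ)|)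
            (fun s _ => abs_nonneg _) (Finset.mem_univ j))
        have hr0 : (0:ℝ) < r := lt_of_lt_of_le one_pos hr1
        have hεpos : 0 < κ⁻¹ * r ^ (-ν) :=
          mul_pos (inv_pos.2 hκ) (Real.rpow_pos_of_pos hr0 _)
        have hεle : κ⁻¹ * r ^ (-ν) ≤ 1 := by
          have h1 : r ^ (-ν) ≤ 1 :=
            Real.rpow_le_one_of_one_le_of_nonpos hr1 (neg_nonpos.2 hν0.le)
          have h2 : κ⁻¹ ≤ 1 := by
            rw [inv_le_one_iff₀]; right; exact hκ1
          exact mul_le_one₀ h2 (Real.rpow_nonneg hr0.le _) h1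
        have hUsub : U k ⊆ {ω : Fin (n+1) → ℝ | (∀ s, ω s ∈ Set.Icc (-L) L) ∧
            ∃ m : ℤ, |(∑ s, ω s * (k s : ℝ)) - (m:ℝ)| < κ⁻¹ * r ^ (-ν)} :=
          fun ω hω => ⟨hω.1, hω.2.2⟩
        have hslab := aux_slab n L hL k j hj (κ⁻¹ * r ^ (-ν)) hεpos hεle
        have hcomp : ENNReal.ofReal (r ^ (-ν)) ≤ ∏ s, w (k s) := by
          have hprod : r ^ (-ν) ≤ ∏ s : Fin (n+1), (max 1 |(k s : ℝ)|) ^ (-p) := by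
            have hstep : ∀ s : Fin (n+1), r ^ (-p) ≤ (max 1 |(k s : ℝ)|) ^ (-p) := by
              intro s
              apply Real.rpow_le_rpow_of_nonpos (lt_of_lt_of_le one_pos (le_max_left _ _))
                ?_ (neg_nonpos.2 hp0.le)
              exact max_le hr1 (Finset.single_le_sum (f := fun t => |(k t : ℝ)|)
                (fun t _ => abs_nonneg _) (Finset.mem_univ s))
            calc r ^ (-ν) = ∏ _s : Fin (n+1), r ^ (-p) := by
                  rw [Finset.prod_const, Finset.card_univ, Fintype.card_fin,
                    ← Real.rpow_natCast (r ^ (-p)) (n+1), ← Real.rpow_mul hr0.le]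
                  congr 1
                  push_cast
                  field_simp [hp]
                  rw [hp, div_mul_cancel₀ _ hn1.ne']
              _ ≤ ∏ s : Fin (n+1), (max 1 |(k s : ℝ)|) ^ (-p) :=
                  Finset.prod_le_prod (fun s _ => Real.rpow_nonneg hr0.le _)
                    (fun s _ => hstep s)
          calc ENNReal.ofReal (r ^ (-ν))
              ≤ ENNReal.ofReal (∏ s : Fin (n+1), (max 1 |(k s : ℝ)|) ^ (-p)) :=
                ENNReal.ofReal_le_ofReal hprod
            _ = ∏ s, w (k s) :=
                ENNReal.ofReal_prod_of_nonneg fun s _ =>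
                  Real.rpow_nonneg (le_trans zero_le_one (le_max_left _ _)) _
        calc volume (U k)
            ≤ ENNReal.ofReal ((2*L)^n * ((2*L+3) * (2 * (κ⁻¹ * r ^ (-ν))))) :=
              (measure_mono hUsub).trans hslab
          _ = ENNReal.ofReal (D * κ⁻¹) * ENNReal.ofReal (r ^ (-ν)) := by
              rw [← ENNReal.ofReal_mul (by positivity)]
              congr 1
              rw [hD]
              ring
          _ ≤ ENNReal.ofReal (D * κ⁻¹) * ∏ s, w (k s) := by
              exact mul_le_mul_of_nonneg_left hcomp (zero_le)
    calc volume B ≤ ∑' k : Fin (n+1) → ℤ, volume (U k) :=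
          (measure_mono hBsub).trans (measure_iUnion_le _)
      _ ≤ ∑' k : Fin (n+1) → ℤ, ENNReal.ofReal (D * κ⁻¹) * ∏ s, w (k s) :=
          ENNReal.tsum_le_tsum hterm
      _ = ENNReal.ofReal (D * κ⁻¹) * W ^ (n+1) := by
          rw [ENNReal.tsum_mul_left, aux_tsum_pi w (n+1)]
      _ ≤ ENNReal.ofReal (C / κ) := by
          rw [show W ^ (n+1) = ENNReal.ofReal Sr from (ENNReal.ofReal_toReal hWpow).symm,
            ← ENNReal.ofReal_mul (by positivity)]
          apply ENNReal.ofReal_le_ofReal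
          rw [div_eq_mul_inv, hC]
          have hκinv : 0 ≤ κ⁻¹ := inv_nonneg.2 hκ.le
          nlinarith [pow_pos (by linarith : (0:ℝ) < 2*L) (n+1)]
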